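/- Let S ⊆ {1,2,…} be countable with probability measure μ and symmetric kernel κ : S × S → (0,∞) satisfying ∫_S e^{a ψ(x)} dμ(x) < ∞ for some a > 0 where ψ(x) = (∑_{y∈S} κ(x,y)² μ(y))^{1/2}, and κ(x,y) ≤ c₁·T_κ[1](x)·T_κ[1](y) for all x,y and some c₁ > 0. For 0 < q < a/4 and c ≥ 1 let μ_q(x) = m_q·e^{q·T_κ[1](x)}·μ(x) with m_q = (∑_{x∈S} e^{q·T_κ[1](x)} μ(x))^{−1}, and define T_{cκ,μ_q}[f](x) = ∑_{y∈S} c·κ(x,y) f(y) μ_q(y). Then ‖T_{cκ,μ_q}‖_HS < ∞, ‖T_{cκ,μ_q} − T_κ‖_HS → 0 as c → 1 and q → 0, and consequently ‖T_{cκ,μ_q}‖ → ‖T_κ‖ as c → 1 and q → 0. -/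

import Mathlib

open MeasureTheory Filter Topology
open scoped ENNReal

/-- The `L²(ν)` operator norm of the integral operator with kernel `κ`. -/
noncomputable def opNorm {S : Type*} [MeasurableSpace S] (ν : Measure S)
    (κ : S → S → ℝ) : ℝ≥0∞ :=
  ⨆ (f : S → ℝ≥0∞) (_ : Measurable f) (_ : (∫⁻ x, f x ^ 2 ∂ν) ^ ((1 : ℝ) / 2) ≤ 1),
    (∫⁻ x, (∫⁻ y, ENNReal.ofReal (κ x y) * f y ∂ν) ^ 2 ∂ν) ^ ((1 : ℝ) / 2)

/-- The Hilbert–Schmidt norm of the integral operator with kernel `κ` on `L²(ν)`. -/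
noncomputable def hsNorm {S : Type*} [MeasurableSpace S] (ν : Measure S)
    (κ : S → S → ℝ) : ℝ≥0∞ :=
  (∫⁻ x, ∫⁻ y, ENNReal.ofReal (κ x y) ^ 2 ∂ν ∂ν) ^ ((1 : ℝ) / 2)

section Aux
variable {S : Type*} [MeasurableSpace S] [Countable S] [MeasurableSingletonClass S]

theorem holder2 (μ : Measure S) (g f : S → ℝ≥0∞) :
    ∫⁻ y, g y * f y ∂μ ≤
      (∫⁻ y, g y ^ 2 ∂μ) ^ ((1:ℝ)/2) * (∫⁻ y, f y ^ 2 ∂μ) ^ ((1:ℝ)/2) := by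
  have h := ENNReal.lintegral_mul_le_Lp_mul_Lq μ (p := 2) (q := 2)
    (Real.holderConjugate_iff_eq_conjExponent (by norm_num) |>.mpr (by norm_num))
    (measurable_of_countable g).aemeasurable (measurable_of_countable f).aemeasurable
  have e : ∀ x : ℝ≥0∞, x ^ (2:ℝ) = x ^ (2:ℕ) := fun x => by
    rw [← ENNReal.rpow_natCast]; norm_num
  simp only [e, one_div] at h
  simpa [one_div] using h

theorem sq_rpow_half (x : ℝ≥0∞) : (x ^ ((1:ℝ)/2)) ^ (2:ℕ) = x := by
  rw [← ENNReal.rpow_natCast (x ^ ((1:ℝ)/2)), ← ENNReal.rpow_mul]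
  norm_num

theorem opNorm_le_add (μ : Measure S) (κA κB : S → S → ℝ) (E : S → S → ℝ≥0∞)
    (h : ∀ x y, ENNReal.ofReal (κA x y) ≤ ENNReal.ofReal (κB x y) + E x y) :
    opNorm μ κA ≤ opNorm μ κB + (∫⁻ x, ∫⁻ y, E x y ^ 2 ∂μ ∂μ) ^ ((1:ℝ)/2) := by
  refine iSup_le fun f => iSup_le fun hf => iSup_le fun hnorm => ?_
  set IB : S → ℝ≥0∞ := fun x => ∫⁻ y, ENNReal.ofReal (κB x y) * f y ∂μ with hIB
  set IE : S → ℝ≥0∞ := fun x => ∫⁻ y, E x y * f y ∂μ with hIE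
  have step1 : (∫⁻ x, (∫⁻ y, ENNReal.ofReal (κA x y) * f y ∂μ) ^ 2 ∂μ) ^ ((1:ℝ)/2)
      ≤ (∫⁻ x, (IB x + IE x) ^ 2 ∂μ) ^ ((1:ℝ)/2) := by
    refine ENNReal.rpow_le_rpow (lintegral_mono fun x => ?_) (by norm_num)
    refine pow_le_pow_left' ?_ 2
    rw [hIB, hIE, ← lintegral_add_left (measurable_of_countable _)]
    exact lintegral_mono fun y => by
      rw [← add_mul]; exact mul_le_mul_left (h x y) (f y)
  have step2 : (∫⁻ x, (IB x + IE x) ^ 2 ∂μ) ^ ((1:ℝ)/2)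
      ≤ (∫⁻ x, IB x ^ 2 ∂μ) ^ ((1:ℝ)/2) + (∫⁻ x, IE x ^ 2 ∂μ) ^ ((1:ℝ)/2) := by
    have := ENNReal.lintegral_Lp_add_le (μ := μ) (p := 2)
      (measurable_of_countable IB).aemeasurable (measurable_of_countable IE).aemeasurable
      (by norm_num)
    have e : ∀ x : ℝ≥0∞, x ^ (2:ℝ) = x ^ (2:ℕ) := fun x => by
      rw [← ENNReal.rpow_natCast]; norm_num
    simp only [e, one_div, Pi.add_apply] at this
    simpa [one_div] using this
  have step3 : (∫⁻ x, IB x ^ 2 ∂μ) ^ ((1:ℝ)/2) ≤ opNorm μ κB :=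
    le_iSup_of_le f (le_iSup_of_le hf (le_iSup_of_le hnorm le_rfl))
  have step4 : (∫⁻ x, IE x ^ 2 ∂μ) ^ ((1:ℝ)/2)
      ≤ (∫⁻ x, ∫⁻ y, E x y ^ 2 ∂μ ∂μ) ^ ((1:ℝ)/2) := by
    refine ENNReal.rpow_le_rpow (lintegral_mono fun x => ?_) (by norm_num)
    have h1 : IE x ≤ (∫⁻ y, E x y ^ 2 ∂μ) ^ ((1:ℝ)/2) := by
      refine (holder2 μ (E x) f).trans ?_
      calc (∫⁻ y, E x y ^ 2 ∂μ) ^ ((1:ℝ)/2) * (∫⁻ y, f y ^ 2 ∂μ) ^ ((1:ℝ)/2)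
          ≤ (∫⁻ y, E x y ^ 2 ∂μ) ^ ((1:ℝ)/2) * 1 := mul_le_mul_right hnorm _
        _ = (∫⁻ y, E x y ^ 2 ∂μ) ^ ((1:ℝ)/2) := mul_one _
    calc IE x ^ 2 ≤ ((∫⁻ y, E x y ^ 2 ∂μ) ^ ((1:ℝ)/2)) ^ (2:ℕ) := pow_le_pow_left' h1 2
      _ = ∫⁻ y, E x y ^ 2 ∂μ := sq_rpow_half _
  calc (∫⁻ x, (∫⁻ y, ENNReal.ofReal (κA x y) * f y ∂μ) ^ 2 ∂μ) ^ ((1:ℝ)/2)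
      ≤ (∫⁻ x, IB x ^ 2 ∂μ) ^ ((1:ℝ)/2) + (∫⁻ x, IE x ^ 2 ∂μ) ^ ((1:ℝ)/2) :=
        step1.trans step2
    _ ≤ opNorm μ κB + (∫⁻ x, ∫⁻ y, E x y ^ 2 ∂μ ∂μ) ^ ((1:ℝ)/2) := add_le_add step3 step4

theorem opNorm_withDensity (μ : Measure S) (κ' : S → S → ℝ) (hκ' : ∀ x y, 0 ≤ κ' x y)
    (ρ : S → ℝ) (hρ : ∀ x, 0 < ρ x) :
    opNorm (μ.withDensity fun x => ENNReal.ofReal (ρ x)) κ'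
      = opNorm μ (fun x y => κ' x y * Real.sqrt (ρ x) * Real.sqrt (ρ y)) := by
  set w : S → ℝ≥0∞ := fun x => ENNReal.ofReal (ρ x) with hw
  set s : S → ℝ≥0∞ := fun x => ENNReal.ofReal (Real.sqrt (ρ x)) with hs
  have hs0 : ∀ x, s x ≠ 0 := fun x => by
    simp [hs, ENNReal.ofReal_eq_zero, not_le, Real.sqrt_pos.2 (hρ x)]
  have hstop : ∀ x, s x ≠ ⊤ := fun x => ENNReal.ofReal_ne_top
  have hss : ∀ x, s x * s x = w x := fun x => by
    rw [hs, hw, ← ENNReal.ofReal_mul (Real.sqrt_nonneg _), Real.mul_self_sqrt (hρ x).le]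
  have hwd : ∀ g : S → ℝ≥0∞, ∫⁻ x, g x ∂(μ.withDensity w) = ∫⁻ x, w x * g x ∂μ := fun g => by
    rw [lintegral_withDensity_eq_lintegral_mul μ (measurable_of_countable w)
      (measurable_of_countable g)]; rfl
  have hnormEq : ∀ f : S → ℝ≥0∞,
      (∫⁻ x, f x ^ 2 ∂(μ.withDensity w)) = ∫⁻ x, (f x * s x) ^ 2 ∂μ := by
    intro f
    rw [hwd]
    refine lintegral_congr fun x => ?_
    rw [mul_pow, pow_two (s x), hss x, mul_comm]
  have hK : ∀ x y, ENNReal.ofReal (κ' x y * Real.sqrt (ρ x) * Real.sqrt (ρ y))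
      = ENNReal.ofReal (κ' x y) * s x * s y := fun x y => by
    rw [ENNReal.ofReal_mul (mul_nonneg (hκ' x y) (Real.sqrt_nonneg _)),
      ENNReal.ofReal_mul (hκ' x y)]
  have hvalEq : ∀ f : S → ℝ≥0∞,
      (∫⁻ x, (∫⁻ y, ENNReal.ofReal (κ' x y) * f y ∂(μ.withDensity w)) ^ 2 ∂(μ.withDensity w))
      = ∫⁻ x, (∫⁻ y, ENNReal.ofReal (κ' x y * Real.sqrt (ρ x) * Real.sqrt (ρ y))
          * (f y * s y) ∂μ) ^ 2 ∂μ := by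
    intro f
    rw [hwd]
    refine lintegral_congr fun x => ?_
    have inner : ∫⁻ y, ENNReal.ofReal (κ' x y * Real.sqrt (ρ x) * Real.sqrt (ρ y))
        * (f y * s y) ∂μ
        = s x * ∫⁻ y, ENNReal.ofReal (κ' x y) * f y ∂(μ.withDensity w) := by
      rw [hwd, ← lintegral_const_mul (s x) (measurable_of_countable _)]
      refine lintegral_congr fun y => ?_
      rw [hK]
      calc ENNReal.ofReal (κ' x y) * s x * s y * (f y * s y)
          = s x * ((s y * s y) * (ENNReal.ofReal (κ' x y) * f y)) := by ring
        _ = s x * (w y * (ENNReal.ofReal (κ' x y) * f y)) := by rw [hss]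
    rw [inner, mul_pow, pow_two (s x), hss x, mul_comm]
  apply le_antisymm
  · refine iSup_le fun f => iSup_le fun hf => iSup_le fun hnorm => ?_
    set g : S → ℝ≥0∞ := fun x => f x * s x with hg
    have hgnorm : (∫⁻ x, g x ^ 2 ∂μ) ^ ((1:ℝ)/2) ≤ 1 := by
      rw [← hnormEq]; exact hnorm
    have : (∫⁻ x, (∫⁻ y, ENNReal.ofReal (κ' x y) * f y ∂(μ.withDensity w)) ^ 2
        ∂(μ.withDensity w)) ^ ((1:ℝ)/2)
        = (∫⁻ x, (∫⁻ y, ENNReal.ofReal (κ' x y * Real.sqrt (ρ x) * Real.sqrt (ρ y))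
            * g y ∂μ) ^ 2 ∂μ) ^ ((1:ℝ)/2) := by rw [hvalEq]
    rw [this]
    exact le_iSup_of_le g (le_iSup_of_le (measurable_of_countable g)
      (le_iSup_of_le hgnorm le_rfl))
  · refine iSup_le fun g => iSup_le fun hg => iSup_le fun hgnorm => ?_
    set f : S → ℝ≥0∞ := fun x => g x * (s x)⁻¹ with hf
    have hfs : ∀ x, f x * s x = g x := fun x => by
      rw [hf]
      calc g x * (s x)⁻¹ * s x = g x * ((s x)⁻¹ * s x) := mul_assoc _ _ _
        _ = g x := by rw [ENNReal.inv_mul_cancel (hs0 x) (hstop x), mul_one]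
    have hfnorm : (∫⁻ x, f x ^ 2 ∂(μ.withDensity w)) ^ ((1:ℝ)/2) ≤ 1 := by
      rw [hnormEq]
      simpa only [hfs] using hgnorm
    have hval : (∫⁻ x, (∫⁻ y, ENNReal.ofReal (κ' x y * Real.sqrt (ρ x) * Real.sqrt (ρ y))
        * g y ∂μ) ^ 2 ∂μ) ^ ((1:ℝ)/2)
        = (∫⁻ x, (∫⁻ y, ENNReal.ofReal (κ' x y) * f y ∂(μ.withDensity w)) ^ 2
          ∂(μ.withDensity w)) ^ ((1:ℝ)/2) := by
      rw [hvalEq]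
      simp only [hfs]
    rw [hval]
    exact le_iSup_of_le f (le_iSup_of_le (measurable_of_countable f)
      (le_iSup_of_le hfnorm le_rfl))

theorem key_tendsto {ι : Type*} {l : Filter ι} [l.IsCountablyGenerated]
    (μ : Measure S) [SFinite μ] (G : ι → S → S → ℝ) (B : S → ℝ) (hB0 : ∀ x, 0 ≤ B x)
    (hB : ∫⁻ x, ENNReal.ofReal (B x) ∂μ ≠ ⊤)
    (hbound : ∀ᶠ i in l, ∀ x y, (G i x y) ^ 2 ≤ B x * B y)
    (hlim : ∀ x y, Tendsto (fun i => G i x y) l (𝓝 0)) :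
    Tendsto (fun i => (∫⁻ x, ∫⁻ y, ENNReal.ofReal ((G i x y) ^ 2) ∂μ ∂μ) ^ ((1:ℝ)/2)) l
      (𝓝 0) := by
  have hrw : ∀ i, (∫⁻ x, ∫⁻ y, ENNReal.ofReal ((G i x y) ^ 2) ∂μ ∂μ)
      = ∫⁻ z : S × S, ENNReal.ofReal ((G i z.1 z.2) ^ 2) ∂(μ.prod μ) := fun i =>
    (lintegral_prod (fun z : S × S => ENNReal.ofReal ((G i z.1 z.2) ^ 2))
      (measurable_of_countable _).aemeasurable).symm
  have main : Tendsto (fun i => ∫⁻ z : S × S, ENNReal.ofReal ((G i z.1 z.2) ^ 2) ∂(μ.prod μ))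
      l (𝓝 0) := by
    have h0 : (0:ℝ≥0∞) = ∫⁻ _z : S × S, 0 ∂(μ.prod μ) := by simp
    rw [h0]
    refine tendsto_lintegral_filter_of_dominated_convergence
      (fun z => ENNReal.ofReal (B z.1) * ENNReal.ofReal (B z.2)) ?_ ?_ ?_ ?_
    · exact Eventually.of_forall fun i => (measurable_of_countable _)
    · refine hbound.mono fun i hi => ae_of_all _ fun z => ?_
      show ENNReal.ofReal (G i z.1 z.2 ^ 2) ≤ ENNReal.ofReal (B z.1) * ENNReal.ofReal (B z.2)
      rw [← ENNReal.ofReal_mul (hB0 z.1)]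
      exact ENNReal.ofReal_le_ofReal (hi z.1 z.2)
    · show (∫⁻ z : S × S, ENNReal.ofReal (B z.1) * ENNReal.ofReal (B z.2) ∂(μ.prod μ)) ≠ ⊤
      have hpm := lintegral_prod_mul (μ := μ) (ν := μ)
        (f := fun x => ENNReal.ofReal (B x)) (g := fun x => ENNReal.ofReal (B x))
        (measurable_of_countable _).aemeasurable (measurable_of_countable _).aemeasurable
      rw [hpm]
      exact ENNReal.mul_ne_top hB hB
    · refine ae_of_all _ fun z => ?_
      have : Tendsto (fun i => (G i z.1 z.2) ^ 2) l (𝓝 0) := by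
        simpa using (hlim z.1 z.2).pow 2
      simpa [Function.comp_def] using (ENNReal.continuous_ofReal.tendsto 0).comp this
  simp only [hrw]
  have := (ENNReal.continuous_rpow_const (y := (1:ℝ)/2)).tendsto 0 |>.comp main
  simpa [Function.comp_def] using this
end Aux

set_option maxHeartbeats 2000000 in
theorem stmt19 (S : Set ℕ) (hS : ∀ n ∈ S, 0 < n)
    (μ : Measure S) [IsProbabilityMeasure μ]
    (κ : S → S → ℝ) (hκmeas : Measurable (Function.uncurry κ))
    (hκsymm : ∀ x y, κ x y = κ y x) (hκpos : ∀ x y, 0 < κ x y)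
    (hκ2 : ∀ x, Integrable (fun y => κ x y ^ 2) μ)
    (ψ : S → ℝ) (hψ : ∀ x, ψ x = Real.sqrt (∫ y, κ x y ^ 2 ∂μ))
    (a : ℝ) (ha : 0 < a)
    (hexp : Integrable (fun x => Real.exp (a * ψ x)) μ)
    (T1 : S → ℝ) (hT1 : ∀ x, T1 x = ∫ y, κ x y ∂μ)
    (c₁ : ℝ) (hc₁ : 0 < c₁)
    (hTT : ∀ x y, κ x y ≤ c₁ * T1 x * T1 y)
    (m : ℝ → ℝ) (hm : ∀ q, m q = (∫ x, Real.exp (q * T1 x) ∂μ)⁻¹)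
    (μq : ℝ → Measure S)
    (hμq : ∀ q, μq q =
      μ.withDensity (fun x => ENNReal.ofReal (m q * Real.exp (q * T1 x)))) :
    (∀ q : ℝ, 0 < q → q < a / 4 → ∀ c : ℝ, 1 ≤ c →
      hsNorm (μq q) (fun x y => c * κ x y) < ⊤) ∧
    Tendsto
      (fun cq : ℝ × ℝ =>
        (∫⁻ x, ∫⁻ y, ENNReal.ofReal
            ((cq.1 * κ x y * m cq.2 * Real.exp (cq.2 * T1 y) - κ x y) ^ 2) ∂μ ∂μ)
          ^ ((1 : ℝ) / 2))
      ((nhdsWithin 1 (Set.Ici 1)) ×ˢ (nhdsWithin 0 (Set.Ioi 0)))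
      (nhds 0) ∧
    Tendsto
      (fun cq : ℝ × ℝ => opNorm (μq cq.2) (fun x y => cq.1 * κ x y))
      ((nhdsWithin 1 (Set.Ici 1)) ×ˢ (nhdsWithin 0 (Set.Ioi 0)))
      (nhds (opNorm μ κ)) := by
  -- basic positivity facts
  have hκ0 : ∀ x y, 0 ≤ κ x y := fun x y => (hκpos x y).le
  have hψ0 : ∀ x, 0 ≤ ψ x := fun x => (hψ x) ▸ Real.sqrt_nonneg _
  have hκint : ∀ x, Integrable (fun y => κ x y) μ := by
    intro x
    refine Integrable.mono' (((hκ2 x).add (integrable_const 1)).div_const 2)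
      (measurable_of_countable _).aestronglyMeasurable (ae_of_all _ fun y => ?_)
    rw [Real.norm_eq_abs, abs_of_nonneg (hκ0 x y)]
    simp only [Pi.add_apply]
    nlinarith [sq_nonneg (κ x y - 1)]
  have hT1nn : ∀ x, 0 ≤ T1 x := fun x => (hT1 x) ▸ integral_nonneg fun y => hκ0 x y
  -- Cauchy-Schwarz : T1 ≤ ψ
  have hT1ψ : ∀ x, T1 x ≤ ψ x := by
    intro x
    have h2 : (2:ℝ).HolderConjugate 2 :=
      Real.holderConjugate_iff_eq_conjExponent (by norm_num) |>.mpr (by norm_num)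
    have hmem : MemLp (fun y => κ x y) (ENNReal.ofReal 2) μ := by
      rw [show ENNReal.ofReal 2 = 2 by simp]
      refine (memLp_two_iff_integrable_sq (measurable_of_countable _).aestronglyMeasurable).mpr ?_
      exact hκ2 x
    have hone : MemLp (fun _ : S => (1:ℝ)) (ENNReal.ofReal 2) μ := memLp_const 1
    have := integral_mul_le_Lp_mul_Lq_of_nonneg h2 (ae_of_all _ fun y => hκ0 x y)
      (ae_of_all _ fun _ => zero_le_one) hmem hone
    simp only [mul_one] at this
    have hre : ∀ t : ℝ, t ^ (2:ℝ) = t ^ (2:ℕ) := fun t => by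
      rw [show (2:ℝ) = ((2:ℕ):ℝ) by norm_num, Real.rpow_natCast]
    simp only [hre, one_pow] at this
    rw [hT1 x, hψ x]
    calc ∫ y, κ x y ∂μ
        ≤ (∫ y, κ x y ^ (2:ℕ) ∂μ) ^ ((1:ℝ)/2) * (∫ _y : S, (1:ℝ) ∂μ) ^ ((1:ℝ)/2) := by
          simpa [one_div] using this
      _ = (∫ y, κ x y ^ 2 ∂μ) ^ ((1:ℝ)/2) := by simp
      _ = Real.sqrt (∫ y, κ x y ^ 2 ∂μ) := by
          rw [Real.sqrt_eq_rpow]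
  have hκψ : ∀ x y, κ x y ≤ c₁ * ψ x * ψ y := by
    intro x y
    calc κ x y ≤ c₁ * T1 x * T1 y := hTT x y
      _ ≤ c₁ * ψ x * ψ y := by
          have h1 : T1 x * T1 y ≤ ψ x * ψ y :=
            mul_le_mul (hT1ψ x) (hT1ψ y) (hT1nn y) (hψ0 x)
          calc c₁ * T1 x * T1 y = c₁ * (T1 x * T1 y) := mul_assoc _ _ _
            _ ≤ c₁ * (ψ x * ψ y) := mul_le_mul_of_nonneg_left h1 hc₁.le
            _ = c₁ * ψ x * ψ y := (mul_assoc _ _ _).symm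
  -- the polynomial-exponential bound
  have sq_exp : ∀ s t : ℝ, 0 < s → 0 ≤ t → t ^ 2 ≤ s⁻¹ ^ 2 * Real.exp (2 * s * t) := by
    intro s t hs ht
    have h1 : s * t ≤ Real.exp (s * t) := by
      nlinarith [Real.add_one_le_exp (s * t)]
    have h2 : (s * t) ^ 2 ≤ Real.exp (s * t) ^ 2 :=
      pow_le_pow_left₀ (by positivity) h1 2
    have h3 : Real.exp (s * t) ^ 2 = Real.exp (2 * s * t) := by
      rw [pow_two, ← Real.exp_add]; ring_nf
    have h4 : t ^ 2 = s⁻¹ ^ 2 * (s * t) ^ 2 := by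
      field_simp
    rw [h4, ← h3]
    exact mul_le_mul_of_nonneg_left h2 (by positivity)
  -- integrability of exp(q T1)
  have hqT1aψ : ∀ q x, 0 ≤ q → q ≤ a → q * T1 x ≤ a * ψ x := by
    intro q x h0 h1
    have := hT1nn x; have := hT1ψ x
    nlinarith
  have hint_exp : ∀ q, 0 ≤ q → q ≤ a → Integrable (fun x => Real.exp (q * T1 x)) μ := by
    intro q h0 h1
    refine hexp.mono' (measurable_of_countable _).aestronglyMeasurable (ae_of_all _ fun x => ?_)
    rw [Real.norm_eq_abs, abs_of_pos (Real.exp_pos _)]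
    exact Real.exp_le_exp.2 (hqT1aψ q x h0 h1)
  have hZ1 : ∀ q, 0 ≤ q → q ≤ a → 1 ≤ ∫ x, Real.exp (q * T1 x) ∂μ := by
    intro q h0 h1
    have h2 : ∫ _x : S, (1:ℝ) ∂μ = 1 := by simp
    rw [← h2]
    refine integral_mono (integrable_const 1) (hint_exp q h0 h1) fun x => ?_
    have : (0:ℝ) ≤ q * T1 x := mul_nonneg h0 (hT1nn x)
    nlinarith [Real.add_one_le_exp (q * T1 x)]
  have hm_pos : ∀ q, 0 ≤ q → q ≤ a → 0 < m q := by
    intro q h0 h1; rw [hm q]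
    exact inv_pos.2 (lt_of_lt_of_le one_pos (hZ1 q h0 h1))
  have hm_le : ∀ q, 0 ≤ q → q ≤ a → m q ≤ 1 := by
    intro q h0 h1; rw [hm q]
    exact inv_le_one_of_one_le₀ (hZ1 q h0 h1)
  -- m q → 1
  have hmt : Tendsto m (𝓝[>] (0:ℝ)) (𝓝 1) := by
    have hZt : Tendsto (fun q => ∫ x, Real.exp (q * T1 x) ∂μ) (𝓝[>] (0:ℝ)) (𝓝 1) := by
      have h1 : (1:ℝ) = ∫ _x : S, (1:ℝ) ∂μ := by simp
      rw [h1]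
      refine tendsto_integral_filter_of_dominated_convergence
        (fun x => Real.exp (a * ψ x)) ?_ ?_ hexp ?_
      · exact Eventually.of_forall fun q => (measurable_of_countable _).aestronglyMeasurable
      · filter_upwards [Ioo_mem_nhdsGT_of_mem (Set.mem_Ico.2 ⟨le_rfl, ha⟩)] with q hq
        refine ae_of_all _ fun x => ?_
        rw [Real.norm_eq_abs, abs_of_pos (Real.exp_pos _)]
        exact Real.exp_le_exp.2 (hqT1aψ q x hq.1.le hq.2.le)
      · refine ae_of_all _ fun x => ?_
        have hc : Tendsto (fun q : ℝ => Real.exp (q * T1 x)) (𝓝 0) (𝓝 1) := by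
          have hcont : Continuous fun q : ℝ => Real.exp (q * T1 x) :=
            Real.continuous_exp.comp (continuous_id.mul continuous_const)
          have := hcont.tendsto (0:ℝ)
          simpa using this
        exact hc.mono_left nhdsWithin_le_nhds
    have := (hZt.inv₀ one_ne_zero)
    simp only [inv_one] at this
    refine this.congr fun q => ?_
    rw [hm q]
  -- finiteness of the exponential integral, in ENNReal form
  have hexp_fin : (∫⁻ x, ENNReal.ofReal (Real.exp (a * ψ x)) ∂μ) ≠ ⊤ :=
    ((hasFiniteIntegral_iff_ofReal (ae_of_all _ fun x => (Real.exp_pos _).le)).mp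
      hexp.hasFiniteIntegral).ne
  have hqT1 : ∀ q b (x : ↑S), 0 ≤ q → q ≤ b → q * T1 x ≤ b * ψ x := by
    intro q b x h0 h1
    have := hT1nn x; have := hT1ψ x
    nlinarith
  -- the master pointwise bound
  set C0 : ℝ := c₁ ^ 2 * (((a/4)⁻¹ ^ 2) ^ 2) with hC0
  have hC0nn : 0 ≤ C0 := by positivity
  have core : ∀ (M α β : ℝ) (x y : ↑S) (u : ℝ), 0 ≤ M → 0 ≤ α → α ≤ a/4 → 0 ≤ β → β ≤ a/4 →
      |u| ≤ M * κ x y * Real.exp (α * ψ x) * Real.exp (β * ψ y) →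
      u ^ 2 ≤ (M ^ 2 * C0) * (Real.exp (a * ψ x) * Real.exp (a * ψ y)) := by
    intro M α β x y u hM hα0 hα hβ0 hβ hu
    set K : ℝ := (a/4)⁻¹ ^ 2 with hK
    have hKnn : 0 ≤ K := by positivity
    have hsx := sq_exp (a/4) (ψ x) (by linarith) (hψ0 x)
    have hsy := sq_exp (a/4) (ψ y) (by linarith) (hψ0 y)
    have e1x : Real.exp (2 * (a/4) * ψ x) * Real.exp (α * ψ x) ^ 2
        ≤ Real.exp (a * ψ x) := by
      rw [pow_two, ← Real.exp_add, ← Real.exp_add]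
      exact Real.exp_le_exp.2 (by nlinarith [hψ0 x])
    have e1y : Real.exp (2 * (a/4) * ψ y) * Real.exp (β * ψ y) ^ 2
        ≤ Real.exp (a * ψ y) := by
      rw [pow_two, ← Real.exp_add, ← Real.exp_add]
      exact Real.exp_le_exp.2 (by nlinarith [hψ0 y])
    have hx' : ψ x ^ 2 * Real.exp (α * ψ x) ^ 2 ≤ K * Real.exp (a * ψ x) := by
      calc ψ x ^ 2 * Real.exp (α * ψ x) ^ 2
          ≤ (K * Real.exp (2 * (a/4) * ψ x)) * Real.exp (α * ψ x) ^ 2 :=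
            mul_le_mul_of_nonneg_right hsx (by positivity)
        _ = K * (Real.exp (2 * (a/4) * ψ x) * Real.exp (α * ψ x) ^ 2) := by ring
        _ ≤ K * Real.exp (a * ψ x) := mul_le_mul_of_nonneg_left e1x hKnn
    have hy' : ψ y ^ 2 * Real.exp (β * ψ y) ^ 2 ≤ K * Real.exp (a * ψ y) := by
      calc ψ y ^ 2 * Real.exp (β * ψ y) ^ 2
          ≤ (K * Real.exp (2 * (a/4) * ψ y)) * Real.exp (β * ψ y) ^ 2 :=
            mul_le_mul_of_nonneg_right hsy (by positivity)
        _ = K * (Real.exp (2 * (a/4) * ψ y) * Real.exp (β * ψ y) ^ 2) := by ring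
        _ ≤ K * Real.exp (a * ψ y) := mul_le_mul_of_nonneg_left e1y hKnn
    have h2 : κ x y ^ 2 ≤ c₁ ^ 2 * (ψ x ^ 2 * ψ y ^ 2) := by
      calc κ x y ^ 2 ≤ (c₁ * ψ x * ψ y) ^ 2 := pow_le_pow_left₀ (hκ0 x y) (hκψ x y) 2
        _ = c₁ ^ 2 * (ψ x ^ 2 * ψ y ^ 2) := by ring
    calc u ^ 2 = |u| ^ 2 := (sq_abs u).symm
      _ ≤ (M * κ x y * Real.exp (α * ψ x) * Real.exp (β * ψ y)) ^ 2 :=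
          pow_le_pow_left₀ (abs_nonneg u) hu 2
      _ = M ^ 2 * κ x y ^ 2 * (Real.exp (α * ψ x) ^ 2 * Real.exp (β * ψ y) ^ 2) := by ring
      _ ≤ M ^ 2 * (c₁ ^ 2 * (ψ x ^ 2 * ψ y ^ 2))
          * (Real.exp (α * ψ x) ^ 2 * Real.exp (β * ψ y) ^ 2) :=
          mul_le_mul_of_nonneg_right (mul_le_mul_of_nonneg_left h2 (by positivity))
            (by positivity)
      _ = (M ^ 2 * c₁ ^ 2) * ((ψ x ^ 2 * Real.exp (α * ψ x) ^ 2)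
          * (ψ y ^ 2 * Real.exp (β * ψ y) ^ 2)) := by ring
      _ ≤ (M ^ 2 * c₁ ^ 2) * ((K * Real.exp (a * ψ x)) * (K * Real.exp (a * ψ y))) := by
          refine mul_le_mul_of_nonneg_left
            (mul_le_mul hx' hy' (by positivity) (by positivity)) (by positivity)
      _ = (M ^ 2 * C0) * (Real.exp (a * ψ x) * Real.exp (a * ψ y)) := by rw [hC0, hK]; ring
  -- basic density facts
  have hρpos : ∀ q (x : ↑S), 0 ≤ q → q ≤ a → 0 < m q * Real.exp (q * T1 x) :=
    fun q x h0 h1 => mul_pos (hm_pos q h0 h1) (Real.exp_pos _)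
  have hρle : ∀ q (x : ↑S), 0 ≤ q → q ≤ a/4 →
      m q * Real.exp (q * T1 x) ≤ Real.exp (a/4 * ψ x) := by
    intro q x h0 h1
    have hqa : q ≤ a := by linarith
    have hE : Real.exp (q * T1 x) ≤ Real.exp (a/4 * ψ x) :=
      Real.exp_le_exp.2 (hqT1 q (a/4) x h0 h1)
    have := hm_le q h0 hqa
    nlinarith [Real.exp_pos (q * T1 x)]
  have hsqrtρ : ∀ q (x : ↑S), 0 ≤ q → q ≤ a/4 →
      Real.sqrt (m q * Real.exp (q * T1 x)) ≤ Real.exp (a/8 * ψ x) := by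
    intro q x h0 h1
    calc Real.sqrt (m q * Real.exp (q * T1 x))
        ≤ Real.sqrt (Real.exp (a/4 * ψ x)) := Real.sqrt_le_sqrt (hρle q x h0 h1)
      _ = Real.exp (a/4 * ψ x / 2) := (Real.exp_half _).symm
      _ = Real.exp (a/8 * ψ x) := by ring_nf
  -- withDensity lintegral rewriting
  have hwd : ∀ (q : ℝ) (g : ↑S → ℝ≥0∞),
      ∫⁻ x, g x ∂(μ.withDensity fun x => ENNReal.ofReal (m q * Real.exp (q * T1 x)))
        = ∫⁻ x, ENNReal.ofReal (m q * Real.exp (q * T1 x)) * g x ∂μ := by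
    intro q g
    rw [lintegral_withDensity_eq_lintegral_mul μ (measurable_of_countable _)
      (measurable_of_countable g)]
    rfl
  ----------------------------------------------------------------
  -- Part 1 : finiteness of the HS norm
  ----------------------------------------------------------------
  have part1 : ∀ q : ℝ, 0 < q → q < a / 4 → ∀ c : ℝ, 1 ≤ c →
      hsNorm (μq q) (fun x y => c * κ x y) < ⊤ := by
    intro q hq0 hq4 c hc
    have hq0' : (0:ℝ) ≤ q := hq0.le
    have hqa4 : q ≤ a/4 := hq4.le
    have hqa : q ≤ a := by linarith
    have hc0 : (0:ℝ) ≤ c := by linarith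
    rw [hsNorm, hμq q]
    refine ENNReal.rpow_lt_top_of_nonneg (by norm_num) ?_
    rw [hwd q]
    have hinner : ∀ x : ↑S,
        (∫⁻ y, ENNReal.ofReal ((fun x y => c * κ x y) x y) ^ 2
          ∂(μ.withDensity fun z => ENNReal.ofReal (m q * Real.exp (q * T1 z))))
        = ∫⁻ y, ENNReal.ofReal (m q * Real.exp (q * T1 y))
            * ENNReal.ofReal (c * κ x y) ^ 2 ∂μ := fun x => hwd q _
    have hptw : ∀ x y : ↑S,
        ENNReal.ofReal (m q * Real.exp (q * T1 x))
          * (ENNReal.ofReal (m q * Real.exp (q * T1 y)) * ENNReal.ofReal (c * κ x y) ^ 2)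
        ≤ ENNReal.ofReal (c ^ 2 * C0)
            * (ENNReal.ofReal (Real.exp (a * ψ x)) * ENNReal.ofReal (Real.exp (a * ψ y))) := by
      intro x y
      have hρx := (hρpos q x hq0' hqa).le
      have hρy := (hρpos q y hq0' hqa).le
      have hcκ : 0 ≤ c * κ x y := mul_nonneg hc0 (hκ0 x y)
      rw [← ENNReal.ofReal_pow hcκ, ← ENNReal.ofReal_mul hρy, ← ENNReal.ofReal_mul hρx,
        ← ENNReal.ofReal_mul (by positivity),
        ← ENNReal.ofReal_mul (by nlinarith)]
      refine ENNReal.ofReal_le_ofReal ?_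
      -- real inequality via core
      set u : ℝ := c * κ x y * Real.sqrt (m q * Real.exp (q * T1 x))
        * Real.sqrt (m q * Real.exp (q * T1 y)) with hu
      have huq : u ^ 2 = m q * Real.exp (q * T1 x)
          * (m q * Real.exp (q * T1 y) * (c * κ x y) ^ 2) := by
        have h1 : Real.sqrt (m q * Real.exp (q * T1 x)) ^ 2 = m q * Real.exp (q * T1 x) :=
          Real.sq_sqrt hρx
        have h2 : Real.sqrt (m q * Real.exp (q * T1 y)) ^ 2 = m q * Real.exp (q * T1 y) :=
          Real.sq_sqrt hρy
        calc u ^ 2 = (c * κ x y) ^ 2 * (Real.sqrt (m q * Real.exp (q * T1 x)) ^ 2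
            * Real.sqrt (m q * Real.exp (q * T1 y)) ^ 2) := by rw [hu]; ring
          _ = _ := by rw [h1, h2]; ring
      have hub : |u| ≤ c * κ x y * Real.exp (a/8 * ψ x) * Real.exp (a/8 * ψ y) := by
        have hu0 : 0 ≤ u := by
          rw [hu]; positivity
        rw [abs_of_nonneg hu0, hu]
        have s1 : c * κ x y * Real.sqrt (m q * Real.exp (q * T1 x))
            ≤ c * κ x y * Real.exp (a/8 * ψ x) :=
          mul_le_mul_of_nonneg_left (hsqrtρ q x hq0' hqa4) hcκ
        calc c * κ x y * Real.sqrt (m q * Real.exp (q * T1 x))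
              * Real.sqrt (m q * Real.exp (q * T1 y))
            ≤ c * κ x y * Real.exp (a/8 * ψ x) * Real.sqrt (m q * Real.exp (q * T1 y)) :=
              mul_le_mul_of_nonneg_right s1 (Real.sqrt_nonneg _)
          _ ≤ c * κ x y * Real.exp (a/8 * ψ x) * Real.exp (a/8 * ψ y) :=
              mul_le_mul_of_nonneg_left (hsqrtρ q y hq0' hqa4) (by positivity)
      have := core c (a/8) (a/8) x y u hc0 (by linarith) (by linarith) (by linarith)
        (by linarith) hub
      rw [← huq]
      exact this
    -- put the bound together
    set I : ℝ≥0∞ := ∫⁻ x, ENNReal.ofReal (Real.exp (a * ψ x)) ∂μ with hI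
    have hbound : (∫⁻ x, ENNReal.ofReal (m q * Real.exp (q * T1 x))
        * ∫⁻ y, ENNReal.ofReal ((fun x y => c * κ x y) x y) ^ 2
          ∂(μ.withDensity fun z => ENNReal.ofReal (m q * Real.exp (q * T1 z))) ∂μ)
        ≤ (ENNReal.ofReal (c ^ 2 * C0) * I) * I := by
      have step : ∀ x : ↑S, ENNReal.ofReal (m q * Real.exp (q * T1 x))
          * ∫⁻ y, ENNReal.ofReal ((fun x y => c * κ x y) x y) ^ 2
            ∂(μ.withDensity fun z => ENNReal.ofReal (m q * Real.exp (q * T1 z)))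
          ≤ (ENNReal.ofReal (c ^ 2 * C0) * I) * ENNReal.ofReal (Real.exp (a * ψ x)) := by
        intro x
        rw [hinner x, ← lintegral_const_mul _ (measurable_of_countable _)]
        calc ∫⁻ y, ENNReal.ofReal (m q * Real.exp (q * T1 x))
              * (ENNReal.ofReal (m q * Real.exp (q * T1 y))
                * ENNReal.ofReal (c * κ x y) ^ 2) ∂μ
            ≤ ∫⁻ y, ENNReal.ofReal (c ^ 2 * C0) * (ENNReal.ofReal (Real.exp (a * ψ x))
                * ENNReal.ofReal (Real.exp (a * ψ y))) ∂μ := lintegral_mono fun y => hptw x y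
          _ = (ENNReal.ofReal (c ^ 2 * C0) * ENNReal.ofReal (Real.exp (a * ψ x))) * I := by
              rw [hI, ← lintegral_const_mul _ (measurable_of_countable _)]
              refine lintegral_congr fun y => ?_
              ring
          _ = (ENNReal.ofReal (c ^ 2 * C0) * I) * ENNReal.ofReal (Real.exp (a * ψ x)) := by
              ring
      calc (∫⁻ x, ENNReal.ofReal (m q * Real.exp (q * T1 x))
          * ∫⁻ y, ENNReal.ofReal ((fun x y => c * κ x y) x y) ^ 2
            ∂(μ.withDensity fun z => ENNReal.ofReal (m q * Real.exp (q * T1 z))) ∂μ)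
          ≤ ∫⁻ x, (ENNReal.ofReal (c ^ 2 * C0) * I) * ENNReal.ofReal (Real.exp (a * ψ x)) ∂μ :=
            lintegral_mono step
        _ = (ENNReal.ofReal (c ^ 2 * C0) * I) * I := by
            rw [lintegral_const_mul _ (measurable_of_countable _), hI]
      
    refine ne_top_of_le_ne_top ?_ hbound
    exact ENNReal.mul_ne_top (ENNReal.mul_ne_top ENNReal.ofReal_ne_top hexp_fin) hexp_fin
  -- the filter
  set l : Filter (ℝ × ℝ) := (nhdsWithin 1 (Set.Ici 1)) ×ˢ (nhdsWithin 0 (Set.Ioi 0)) with hl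
  haveI hlcg : Filter.IsCountablyGenerated l := by rw [hl]; infer_instance
  have hmem : (Set.Ico (1:ℝ) 2) ×ˢ (Set.Ioo (0:ℝ) (a/4)) ∈ l := by
    rw [hl]
    exact Filter.prod_mem_prod
      (Ico_mem_nhdsGE_of_mem (Set.mem_Ico.2 ⟨le_rfl, one_lt_two⟩))
      (Ioo_mem_nhdsGT_of_mem (Set.mem_Ico.2 ⟨le_rfl, by linarith⟩))
  -- component tendstos
  have hcten : Tendsto (fun cq : ℝ × ℝ => cq.1) l (𝓝 1) :=
    tendsto_fst.mono_right nhdsWithin_le_nhds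
  have hmten : Tendsto (fun cq : ℝ × ℝ => m cq.2) l (𝓝 1) := hmt.comp tendsto_snd
  have heten : ∀ x : ↑S, Tendsto (fun cq : ℝ × ℝ => Real.exp (cq.2 * T1 x)) l (𝓝 1) := by
    intro x
    have hcont : Continuous fun t : ℝ => Real.exp (t * T1 x) :=
      Real.continuous_exp.comp (continuous_id.mul continuous_const)
    have h0 : Tendsto (fun t : ℝ => Real.exp (t * T1 x)) (𝓝 0) (𝓝 1) := by
      have := hcont.tendsto (0:ℝ)
      simpa using this
    exact h0.comp ((tendsto_snd (f := nhdsWithin (1:ℝ) (Set.Ici 1)) (g := nhdsWithin (0:ℝ) (Set.Ioi 0))).mono_right nhdsWithin_le_nhds)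
  have hρten : ∀ x : ↑S,
      Tendsto (fun cq : ℝ × ℝ => m cq.2 * Real.exp (cq.2 * T1 x)) l (𝓝 1) := by
    intro x
    have := hmten.mul (heten x)
    simpa using this
  have hsten : ∀ x : ↑S,
      Tendsto (fun cq : ℝ × ℝ => Real.sqrt (m cq.2 * Real.exp (cq.2 * T1 x))) l (𝓝 1) := by
    intro x
    have := (Real.continuous_sqrt.tendsto 1).comp (hρten x)
    simpa [Real.sqrt_one, Function.comp_def] using this
  -- the constant for the dominating function
  set CA : ℝ := 3 * Real.sqrt C0 + 1 with hCA
  have hCAnn : 0 ≤ CA := by positivity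
  have hCAsq : 9 * C0 ≤ CA ^ 2 := by
    have h1 : Real.sqrt C0 ^ 2 = C0 := Real.sq_sqrt hC0nn
    nlinarith only [h1, Real.sqrt_nonneg C0, hCA]
  have hBfin : (∫⁻ x, ENNReal.ofReal (CA * Real.exp (a * ψ x)) ∂μ) ≠ ⊤ := by
    have : (∫⁻ x, ENNReal.ofReal (CA * Real.exp (a * ψ x)) ∂μ)
        = ENNReal.ofReal CA * ∫⁻ x, ENNReal.ofReal (Real.exp (a * ψ x)) ∂μ := by
      rw [← lintegral_const_mul _ (measurable_of_countable _)]
      exact lintegral_congr fun x => (ENNReal.ofReal_mul hCAnn)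
    rw [this]
    exact ENNReal.mul_ne_top ENNReal.ofReal_ne_top hexp_fin
  have hB0 : ∀ x : ↑S, 0 ≤ CA * Real.exp (a * ψ x) := fun x => by positivity
  ----------------------------------------------------------------
  -- Part 2
  ----------------------------------------------------------------
  have part2 : Tendsto
      (fun cq : ℝ × ℝ =>
        (∫⁻ x, ∫⁻ y, ENNReal.ofReal
            ((cq.1 * κ x y * m cq.2 * Real.exp (cq.2 * T1 y) - κ x y) ^ 2) ∂μ ∂μ)
          ^ ((1 : ℝ) / 2)) l (𝓝 0) := by
    refine key_tendsto (l := l) μ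
      (fun cq x y => cq.1 * κ x y * m cq.2 * Real.exp (cq.2 * T1 y) - κ x y)
      (fun x => CA * Real.exp (a * ψ x)) hB0 hBfin ?_ ?_
    · filter_upwards [hmem] with cq hcq
      intro x y
      obtain ⟨hc, hq⟩ := hcq
      have hq0 : (0:ℝ) ≤ cq.2 := hq.1.le
      have hqa4 : cq.2 ≤ a/4 := hq.2.le
      have hqa : cq.2 ≤ a := by linarith only [hqa4, ha]
      have hmp := hm_pos cq.2 hq0 hqa
      have hml := hm_le cq.2 hq0 hqa
      have hE : Real.exp (cq.2 * T1 y) ≤ Real.exp (a/4 * ψ y) :=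
        Real.exp_le_exp.2 (hqT1 cq.2 (a/4) y hq0 hqa4)
      have he1 : (1:ℝ) ≤ Real.exp (a/4 * ψ y) :=
        Real.one_le_exp (mul_nonneg (by linarith only [ha] : (0:ℝ) ≤ a/4) (hψ0 y))
      have hA0 : 0 ≤ cq.1 * κ x y * m cq.2 * Real.exp (cq.2 * T1 y) := by
        have hc0' : (0:ℝ) ≤ cq.1 := by linarith only [hc.1]
        have hκ0' := hκ0 x y
        positivity
      have hA : cq.1 * κ x y * m cq.2 * Real.exp (cq.2 * T1 y)
          ≤ 2 * κ x y * Real.exp (a/4 * ψ y) := by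
        have s1 : cq.1 * κ x y ≤ 2 * κ x y :=
          mul_le_mul_of_nonneg_right hc.2.le (hκ0 x y)
        have s2 : m cq.2 * Real.exp (cq.2 * T1 y) ≤ 1 * Real.exp (a/4 * ψ y) :=
          mul_le_mul hml hE (Real.exp_pos _).le zero_le_one
        calc cq.1 * κ x y * m cq.2 * Real.exp (cq.2 * T1 y)
            = (cq.1 * κ x y) * (m cq.2 * Real.exp (cq.2 * T1 y)) := by ring
          _ ≤ (2 * κ x y) * (1 * Real.exp (a/4 * ψ y)) :=
              mul_le_mul s1 s2 (mul_nonneg hmp.le (Real.exp_pos _).le)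
                (mul_nonneg (by norm_num) (hκ0 x y))
          _ = 2 * κ x y * Real.exp (a/4 * ψ y) := by ring
      have ht0 : 0 ≤ κ x y * Real.exp (a/4 * ψ y) :=
        mul_nonneg (hκ0 x y) (Real.exp_pos _).le
      have hκe : κ x y ≤ κ x y * Real.exp (a/4 * ψ y) := by
        nlinarith only [hκ0 x y, he1]
      have habs : |cq.1 * κ x y * m cq.2 * Real.exp (cq.2 * T1 y) - κ x y|
          ≤ 3 * κ x y * Real.exp (0 * ψ x) * Real.exp (a/4 * ψ y) := by
        rw [zero_mul, Real.exp_zero, mul_one]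
        rw [abs_le]
        constructor
        · linarith only [hA0, hκe, ht0]
        · linarith only [hA, hκ0 x y, ht0]
      have := core 3 0 (a/4) x y
        (cq.1 * κ x y * m cq.2 * Real.exp (cq.2 * T1 y) - κ x y)
        (by norm_num) le_rfl (by linarith) (by linarith) le_rfl habs
      calc (cq.1 * κ x y * m cq.2 * Real.exp (cq.2 * T1 y) - κ x y) ^ 2
          ≤ (3 ^ 2 * C0) * (Real.exp (a * ψ x) * Real.exp (a * ψ y)) := this
        _ ≤ CA ^ 2 * (Real.exp (a * ψ x) * Real.exp (a * ψ y)) := by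
            refine mul_le_mul_of_nonneg_right ?_ (by positivity)
            linarith only [hCAsq]
        _ = (CA * Real.exp (a * ψ x)) * (CA * Real.exp (a * ψ y)) := by ring
    · intro x y
      have := (((hcten.mul (tendsto_const_nhds (x := κ x y))).mul hmten).mul
        (heten y)).sub (tendsto_const_nhds (x := κ x y))
      simpa using this
  ----------------------------------------------------------------
  -- Part 3
  ----------------------------------------------------------------
  have part3 : Tendsto
      (fun cq : ℝ × ℝ => opNorm (μq cq.2) (fun x y => cq.1 * κ x y)) l
      (𝓝 (opNorm μ κ)) := by
    set Kk : ℝ × ℝ → ↑S → ↑S → ℝ := fun cq x y =>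
      cq.1 * κ x y * Real.sqrt (m cq.2 * Real.exp (cq.2 * T1 x))
        * Real.sqrt (m cq.2 * Real.exp (cq.2 * T1 y)) with hKk
    set D : ℝ × ℝ → ℝ≥0∞ := fun cq =>
      (∫⁻ x, ∫⁻ y, ENNReal.ofReal ((Kk cq x y - κ x y) ^ 2) ∂μ ∂μ) ^ ((1:ℝ)/2) with hD
    -- D → 0
    have hDten : Tendsto D l (𝓝 0) := by
      refine key_tendsto (l := l) μ (fun cq x y => Kk cq x y - κ x y)
        (fun x => CA * Real.exp (a * ψ x)) hB0 hBfin ?_ ?_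
      · filter_upwards [hmem] with cq hcq
        intro x y
        obtain ⟨hc, hq⟩ := hcq
        have hq0 : (0:ℝ) ≤ cq.2 := hq.1.le
        have hqa4 : cq.2 ≤ a/4 := hq.2.le
        have hqa : cq.2 ≤ a := by linarith only [hqa4, ha]
        have hc0 : (0:ℝ) ≤ cq.1 := by linarith only [hc.1]
        have hsx := hsqrtρ cq.2 x hq0 hqa4
        have hsy := hsqrtρ cq.2 y hq0 hqa4
        have hex1 : (1:ℝ) ≤ Real.exp (a/8 * ψ x) :=
          Real.one_le_exp (mul_nonneg (by linarith only [ha] : (0:ℝ) ≤ a/8) (hψ0 x))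
        have hey1 : (1:ℝ) ≤ Real.exp (a/8 * ψ y) :=
          Real.one_le_exp (mul_nonneg (by linarith only [ha] : (0:ℝ) ≤ a/8) (hψ0 y))
        have hKk0 : 0 ≤ Kk cq x y := by
          rw [hKk]
          have hκ0' := hκ0 x y
          positivity
        have hKkle : Kk cq x y ≤ 2 * κ x y * Real.exp (a/8 * ψ x) * Real.exp (a/8 * ψ y) := by
          rw [hKk]
          have s1 : cq.1 * κ x y ≤ 2 * κ x y :=
            mul_le_mul_of_nonneg_right hc.2.le (hκ0 x y)
          have s2 : Real.sqrt (m cq.2 * Real.exp (cq.2 * T1 x))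
              * Real.sqrt (m cq.2 * Real.exp (cq.2 * T1 y))
              ≤ Real.exp (a/8 * ψ x) * Real.exp (a/8 * ψ y) :=
            mul_le_mul hsx hsy (Real.sqrt_nonneg _) (Real.exp_pos _).le
          calc cq.1 * κ x y * Real.sqrt (m cq.2 * Real.exp (cq.2 * T1 x))
                * Real.sqrt (m cq.2 * Real.exp (cq.2 * T1 y))
              = (cq.1 * κ x y) * (Real.sqrt (m cq.2 * Real.exp (cq.2 * T1 x))
                * Real.sqrt (m cq.2 * Real.exp (cq.2 * T1 y))) := by ring
            _ ≤ (2 * κ x y) * (Real.exp (a/8 * ψ x) * Real.exp (a/8 * ψ y)) :=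
                mul_le_mul s1 s2
                  (mul_nonneg (Real.sqrt_nonneg _) (Real.sqrt_nonneg _))
                  (mul_nonneg (by norm_num) (hκ0 x y))
            _ = 2 * κ x y * Real.exp (a/8 * ψ x) * Real.exp (a/8 * ψ y) := by ring
        have h3t0 : 0 ≤ κ x y * Real.exp (a/8 * ψ x) * Real.exp (a/8 * ψ y) :=
          mul_nonneg (mul_nonneg (hκ0 x y) (Real.exp_pos _).le) (Real.exp_pos _).le
        have hκee : κ x y ≤ κ x y * Real.exp (a/8 * ψ x) * Real.exp (a/8 * ψ y) := by
          nlinarith only [hκ0 x y, mul_le_mul hex1 hey1 zero_le_one (Real.exp_pos (a/8 * ψ x)).le]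
        have habs : |Kk cq x y - κ x y|
            ≤ 3 * κ x y * Real.exp (a/8 * ψ x) * Real.exp (a/8 * ψ y) := by
          rw [abs_le]
          constructor
          · linarith only [hKk0, hκee, h3t0]
          · linarith only [hKkle, hκ0 x y, h3t0]
        have := core 3 (a/8) (a/8) x y (Kk cq x y - κ x y) (by norm_num)
          (by linarith) (by linarith) (by linarith) (by linarith) habs
        calc (Kk cq x y - κ x y) ^ 2
            ≤ (3 ^ 2 * C0) * (Real.exp (a * ψ x) * Real.exp (a * ψ y)) := this
          _ ≤ CA ^ 2 * (Real.exp (a * ψ x) * Real.exp (a * ψ y)) := by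
              refine mul_le_mul_of_nonneg_right ?_ (by positivity)
              linarith only [hCAsq]
          _ = (CA * Real.exp (a * ψ x)) * (CA * Real.exp (a * ψ y)) := by ring
      · intro x y
        have := (((hcten.mul (tendsto_const_nhds (x := κ x y))).mul (hsten x)).mul
          (hsten y)).sub (tendsto_const_nhds (x := κ x y))
        simpa [hKk] using this
    -- opNorm μ κ is finite
    have hONfin : opNorm μ κ ≠ ⊤ := by
      have hz : opNorm μ (fun _ _ : ↑S => (0:ℝ)) = 0 := by
        refine le_antisymm (iSup_le fun f => iSup_le fun _ => iSup_le fun _ => ?_) (by simp)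
        simp
      have h0 := opNorm_le_add μ κ (fun _ _ => (0:ℝ))
        (fun x y => ENNReal.ofReal (κ x y)) (fun x y => by simp)
      rw [hz, zero_add] at h0
      refine ne_top_of_le_ne_top ?_ h0
      refine (ENNReal.rpow_lt_top_of_nonneg (by norm_num) ?_).ne
      have hptw : ∀ x y : ↑S, ENNReal.ofReal (κ x y) ^ 2
          ≤ ENNReal.ofReal C0
            * (ENNReal.ofReal (Real.exp (a * ψ x)) * ENNReal.ofReal (Real.exp (a * ψ y))) := by
        intro x y
        have habs : |κ x y| ≤ 1 * κ x y * Real.exp (0 * ψ x) * Real.exp (0 * ψ y) := by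
          rw [abs_of_nonneg (hκ0 x y)]
          simp
        have := core 1 0 0 x y (κ x y) zero_le_one le_rfl (by linarith) le_rfl
          (by linarith) habs
        rw [← ENNReal.ofReal_pow (hκ0 x y),
          ← ENNReal.ofReal_mul (by positivity),
          ← ENNReal.ofReal_mul hC0nn]
        refine ENNReal.ofReal_le_ofReal ?_
        simpa using this
      set I : ℝ≥0∞ := ∫⁻ x, ENNReal.ofReal (Real.exp (a * ψ x)) ∂μ with hI
      have hbound : (∫⁻ x, ∫⁻ y, ENNReal.ofReal (κ x y) ^ 2 ∂μ ∂μ)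
          ≤ (ENNReal.ofReal C0 * I) * I := by
        have step : ∀ x : ↑S, (∫⁻ y, ENNReal.ofReal (κ x y) ^ 2 ∂μ)
            ≤ (ENNReal.ofReal C0 * I) * ENNReal.ofReal (Real.exp (a * ψ x)) := by
          intro x
          calc (∫⁻ y, ENNReal.ofReal (κ x y) ^ 2 ∂μ)
              ≤ ∫⁻ y, ENNReal.ofReal C0 * (ENNReal.ofReal (Real.exp (a * ψ x))
                  * ENNReal.ofReal (Real.exp (a * ψ y))) ∂μ := lintegral_mono fun y => hptw x y
            _ = (ENNReal.ofReal C0 * ENNReal.ofReal (Real.exp (a * ψ x))) * I := by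
                rw [hI, ← lintegral_const_mul _ (measurable_of_countable _)]
                refine lintegral_congr fun y => ?_
                ring
            _ = (ENNReal.ofReal C0 * I) * ENNReal.ofReal (Real.exp (a * ψ x)) := by ring
        calc (∫⁻ x, ∫⁻ y, ENNReal.ofReal (κ x y) ^ 2 ∂μ ∂μ)
            ≤ ∫⁻ x, (ENNReal.ofReal C0 * I) * ENNReal.ofReal (Real.exp (a * ψ x)) ∂μ :=
              lintegral_mono step
          _ = (ENNReal.ofReal C0 * I) * I := by
              rw [lintegral_const_mul _ (measurable_of_countable _), hI]
      show (∫⁻ x, ∫⁻ y, ENNReal.ofReal (κ x y) ^ 2 ∂μ ∂μ) ≠ ⊤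
      exact (lt_of_le_of_lt hbound
        (ENNReal.mul_lt_top
          (ENNReal.mul_lt_top ENNReal.ofReal_lt_top hexp_fin.lt_top) hexp_fin.lt_top)).ne
    -- representation + two-sided bounds, eventually
    have hboth : ∀ᶠ cq in l,
        opNorm (μq cq.2) (fun x y => cq.1 * κ x y) ≤ opNorm μ κ + D cq ∧
        opNorm μ κ ≤ opNorm (μq cq.2) (fun x y => cq.1 * κ x y) + D cq := by
      filter_upwards [hmem] with cq hcq
      obtain ⟨hc, hq⟩ := hcq
      have hq0 : (0:ℝ) ≤ cq.2 := hq.1.le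
      have hqa : cq.2 ≤ a := by linarith only [hq.2, ha]
      have hc0 : (0:ℝ) ≤ cq.1 := by linarith only [hc.1]
      have hrepr : opNorm (μq cq.2) (fun x y => cq.1 * κ x y) = opNorm μ (Kk cq) := by
        rw [hμq cq.2]
        exact opNorm_withDensity μ (fun x y => cq.1 * κ x y)
          (fun x y => mul_nonneg hc0 (hκ0 x y))
          (fun x => m cq.2 * Real.exp (cq.2 * T1 x))
          (fun x => hρpos cq.2 x hq0 hqa)
      have hKk0 : ∀ x y, 0 ≤ Kk cq x y := by
        intro x y
        rw [hKk]
        have hκ0' := hκ0 x y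
        positivity
      set E : ↑S → ↑S → ℝ≥0∞ := fun x y => ENNReal.ofReal (|Kk cq x y - κ x y|) with hE
      have hEeq : (∫⁻ x, ∫⁻ y, E x y ^ 2 ∂μ ∂μ) ^ ((1:ℝ)/2) = D cq := by
        rw [hD]
        congr 1
        refine lintegral_congr fun x => lintegral_congr fun y => ?_
        rw [hE, ← ENNReal.ofReal_pow (abs_nonneg _), sq_abs]
      constructor
      · rw [hrepr]
        have h1 := opNorm_le_add μ (Kk cq) κ E (fun x y => by
          rw [hE, ← ENNReal.ofReal_add (hκ0 x y) (abs_nonneg _)]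
          refine ENNReal.ofReal_le_ofReal ?_
          cases abs_cases (Kk cq x y - κ x y) with
          | inl h => linarith [h.1]
          | inr h => linarith [h.1])
        rwa [hEeq] at h1
      · have h2 := opNorm_le_add μ κ (Kk cq) E (fun x y => by
          rw [hE, ← ENNReal.ofReal_add (hKk0 x y) (abs_nonneg _)]
          refine ENNReal.ofReal_le_ofReal ?_
          cases abs_cases (Kk cq x y - κ x y) with
          | inl h => linarith [h.1]
          | inr h => linarith [h.1])
        rw [hEeq, ← hrepr] at h2
        exact h2
    -- squeeze
    have hendL : Tendsto (fun cq => opNorm μ κ - D cq) l (𝓝 (opNorm μ κ)) := by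
      have := ENNReal.Tendsto.sub (tendsto_const_nhds (x := opNorm μ κ)) hDten
        (Or.inl hONfin)
      simpa using this
    have hendU : Tendsto (fun cq => opNorm μ κ + D cq) l (𝓝 (opNorm μ κ)) := by
      have := (tendsto_const_nhds (x := opNorm μ κ)).add hDten
      simpa using this
    refine tendsto_of_tendsto_of_tendsto_of_le_of_le' hendL hendU ?_ ?_
    · filter_upwards [hboth] with cq hcq
      exact tsub_le_iff_right.2 hcq.2
    · filter_upwards [hboth] with cq hcq
      exact hcq.1
  exact ⟨part1, part2, part3⟩
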